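/- Let ρ₁, ρ₂ be finite positive Borel measures on the circle Λ, absolutely continuous with respect to Haar measure with densities f₁, f₂ ≥ 0, and with ρ₁(Λ) ≤ ρ₂(Λ). Then for every half-open arc (a,b] ⊆ Λ one has ρ₁((a,b]) + J(a) − J(b) = ∫_{(a,b]∩𝒥ᶜ} f₁ dLeb + ∫_{(a,b]∩𝒥} f₂ dLeb; that is, the collapsed measure C_{ρ₂}[ρ₁] is absolutely continuous with density equal to f₂ on 𝒥 and to f₁ on the complement of 𝒥. -/

import Mathlib

open MeasureTheory Set Filter Topology
open scoped ENNReal NNReal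

noncomputable section

instance fact01 : Fact ((0:ℝ) < 1) := ⟨zero_lt_one⟩

/-- The circle `ℝ/ℤ`. -/
abbrev Circle' : Type := AddCircle (1:ℝ)

/-- The angular position of `w` in the arc starting at `u`, measured positively;
a real number in `[0,1)`. -/
noncomputable def theta (u w : Circle') : ℝ := ((AddCircle.equivIco 1 0) (w - u) : ℝ)

/-- The closed arc `[u,v]` from `u` to `v` in the positive direction. -/
def arcCC (u v : Circle') : Set Circle' := {w | theta u w ≤ theta u v}

/-- The half-open arc `(u,v]`. -/
def arcOC (u v : Circle') : Set Circle' := {w | 0 < theta u w ∧ theta u w ≤ theta u v}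

/-- The half-open arc `[u,v)`. -/
def arcCO (u v : Circle') : Set Circle' := {w | theta u w < theta u v}

/-- The open arc `(u,v)`. -/
def arcOO (u v : Circle') : Set Circle' := {w | 0 < theta u w ∧ theta u w < theta u v}

/-- The excess `E(u,v) = ρ₁([u,v]) - ρ₂([u,v])`. -/
noncomputable def excess (ρ₁ ρ₂ : Measure Circle') (u v : Circle') : ℝ :=
  (ρ₁ (arcCC u v)).toReal - (ρ₂ (arcCC u v)).toReal

/-- The flux `J(v) = sup_u max (E(u,v)) 0`. -/
noncomputable def flux (ρ₁ ρ₂ : Measure Circle') (v : Circle') : ℝ :=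
  ⨆ u : Circle', max (excess ρ₁ ρ₂ u v) 0

/-- The set `𝒥 = {v | ∃ u, E(u,v) > 0}`. -/
def Jset (ρ₁ ρ₂ : Measure Circle') : Set Circle' := {v | ∃ u : Circle', 0 < excess ρ₁ ρ₂ u v}

lemma theta_mem (u v : Circle') : theta u v ∈ Ico (0:ℝ) 1 := by
  have h := ((AddCircle.equivIco 1 0) (v - u)).2
  simpa [theta] using h

lemma coe_theta (u v : Circle') : ((theta u v : ℝ) : Circle') = v - u := by
  have h := (AddCircle.equivIco 1 0).symm_apply_apply (v - u)
  rw [← h]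
  rfl

lemma theta_coe (u : Circle') {t : ℝ} (ht : t ∈ Ico (0:ℝ) 1) :
    theta u (u + (t : Circle')) = t := by
  unfold theta
  rw [add_sub_cancel_left]
  show ((QuotientAddGroup.equivIcoMod (zero_lt_one) 0) (t : Circle') : ℝ) = t
  rw [QuotientAddGroup.equivIcoMod_coe]
  exact (toIcoMod_eq_self zero_lt_one).2 (by rwa [zero_add])

lemma theta_sub_coe (w : Circle') {r : ℝ} (hr : r ∈ Ico (0:ℝ) 1) :
    theta (w - (r : Circle')) w = r := by
  have h := theta_coe (w - (r : Circle')) hr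
  rwa [sub_add_cancel] at h

lemma measurable_coe_circle (u : Circle') : Measurable (fun t : ℝ => u + (t : Circle')) :=
  (continuous_const.add (AddCircle.continuous_mk' 1)).measurable

lemma measurable_theta (u : Circle') : Measurable (fun w => theta u w) := by
  have h1 : Measurable (fun w : Circle' => w - u) :=
    (continuous_id.sub continuous_const).measurable
  have h2 : Measurable (fun y : Circle' => ((AddCircle.equivIco 1 0) y : ℝ)) :=
    measurable_subtype_coe.comp (AddCircle.measurableEquivIco 1 0).measurable_toFun
  exact h2.comp h1

lemma measurableSet_arcCC (u v : Circle') : MeasurableSet (arcCC u v) :=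
  measurableSet_le (measurable_theta u) measurable_const

lemma measurableSet_arcOC (u v : Circle') : MeasurableSet (arcOC u v) :=
  (measurableSet_lt measurable_const (measurable_theta u)).inter
    (measurableSet_le (measurable_theta u) measurable_const)

lemma lintegral_circle_shift (u : Circle') (F : Circle' → ℝ≥0∞) :
    ∫⁻ x, F x = ∫⁻ t in Ioc (0:ℝ) 1, F (u + (t : Circle')) := by
  rw [← lintegral_add_left_eq_self F u]
  have h := AddCircle.lintegral_preimage 1 0 (fun y => F (u + y))
  rw [zero_add] at h
  exact h.symm

lemma lintegral_circle_shift' (u : Circle') (c : ℝ) (F : Circle' → ℝ≥0∞) :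
    ∫⁻ x, F x = ∫⁻ t in Ioc c (c+1), F (u + (t : Circle')) := by
  rw [← lintegral_add_left_eq_self F u]
  exact (AddCircle.lintegral_preimage 1 c (fun y => F (u + y))).symm

lemma lintegral_arcCC (h : Circle' → ℝ≥0∞) (hm : Measurable h) (u v : Circle') :
    ∫⁻ x in arcCC u v, h x = ∫⁻ t in Ioc 0 (theta u v), h (u + (t : Circle')) := by
  set θ := theta u v with hθdef
  have hθm := theta_mem u v
  have hsub : Ioc (0:ℝ) θ ⊆ Ioo 0 1 := fun t ht => ⟨ht.1, lt_of_le_of_lt ht.2 hθm.2⟩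
  rw [← lintegral_indicator (measurableSet_arcCC u v), lintegral_circle_shift u]
  rw [setLIntegral_congr (Ioo_ae_eq_Ioc (a := (0:ℝ)) (b := 1) (μ := volume)).symm]
  have hcong : ∀ t ∈ Ioo (0:ℝ) 1,
      (arcCC u v).indicator h (u + (t : Circle'))
        = (Ioc 0 θ).indicator (fun t : ℝ => h (u + (t : Circle'))) t := by
    intro t ht
    have hiff : (u + (t : Circle') ∈ arcCC u v) ↔ t ∈ Ioc 0 θ := by
      rw [arcCC, mem_setOf_eq, theta_coe u ⟨ht.1.le, ht.2⟩, mem_Ioc]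
      exact ⟨fun hle => ⟨ht.1, hle⟩, fun hle => hle.2⟩
    classical
    rw [Set.indicator_apply, Set.indicator_apply, if_congr hiff rfl rfl]
  rw [setLIntegral_congr_fun measurableSet_Ioo hcong,
    lintegral_indicator measurableSet_Ioc, Measure.restrict_restrict measurableSet_Ioc,
    inter_eq_left.2 hsub]

lemma lintegral_arcOC_inter (h : Circle' → ℝ≥0∞) (hm : Measurable h) (u v : Circle')
    (S : Set Circle') (hS : MeasurableSet S) :
    ∫⁻ x in arcOC u v ∩ S, h x
      = ∫⁻ t in Ioc 0 (theta u v) ∩ {t : ℝ | u + (t : Circle') ∈ S},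
          h (u + (t : Circle')) := by
  set θ := theta u v with hθdef
  have hθm := theta_mem u v
  set Q : Set ℝ := {t : ℝ | u + (t : Circle') ∈ S} with hQdef
  have hQm : MeasurableSet Q := (measurable_coe_circle u) hS
  have hsub : Ioc (0:ℝ) θ ∩ Q ⊆ Ioo 0 1 :=
    fun t ht => ⟨ht.1.1, lt_of_le_of_lt ht.1.2 hθm.2⟩
  rw [← lintegral_indicator ((measurableSet_arcOC u v).inter hS), lintegral_circle_shift u]
  rw [setLIntegral_congr (Ioo_ae_eq_Ioc (a := (0:ℝ)) (b := 1) (μ := volume)).symm]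
  have hcong : ∀ t ∈ Ioo (0:ℝ) 1,
      (arcOC u v ∩ S).indicator h (u + (t : Circle'))
        = (Ioc 0 θ ∩ Q).indicator (fun t : ℝ => h (u + (t : Circle'))) t := by
    intro t ht
    have hiff : (u + (t : Circle') ∈ arcOC u v ∩ S) ↔ t ∈ Ioc 0 θ ∩ Q := by
      rw [mem_inter_iff, arcOC, mem_setOf_eq, theta_coe u ⟨ht.1.le, ht.2⟩, mem_inter_iff,
        mem_Ioc]
      exact ⟨fun hh => ⟨⟨hh.1.1, hh.1.2⟩, hh.2⟩, fun hh => ⟨⟨hh.1.1, hh.1.2⟩, hh.2⟩⟩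
    classical
    rw [Set.indicator_apply, Set.indicator_apply, if_congr hiff rfl rfl]
  rw [setLIntegral_congr_fun measurableSet_Ioo hcong,
    lintegral_indicator (measurableSet_Ioc.inter hQm),
    Measure.restrict_restrict (measurableSet_Ioc.inter hQm), inter_eq_left.2 hsub]

lemma ae_lt_top_shift {h : Circle' → ℝ≥0∞} (hm : Measurable h)
    (hfin : ∫⁻ x, h x ∂(volume : Measure Circle') ≠ ⊤) (u : Circle') (c : ℝ) :
    ∀ᵐ t : ℝ ∂(volume.restrict (Ioc c (c+1))), h (u + (t : Circle')) < ⊤ := by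
  refine ae_lt_top (hm.comp (measurable_coe_circle u)) ?_
  rw [← lintegral_circle_shift' u c h]
  exact hfin

lemma setIntegral_toReal_shift {h : Circle' → ℝ≥0∞} (hm : Measurable h)
    (hfin : ∫⁻ x, h x ∂(volume : Measure Circle') ≠ ⊤) (u : Circle') (c : ℝ) {s : Set ℝ}
    (hsub : s ⊆ Ioc c (c+1)) :
    ∫ t : ℝ in s, (h (u + (t : Circle'))).toReal = (∫⁻ t : ℝ in s, h (u + (t : Circle'))).toReal := by
  refine integral_toReal ((hm.comp (measurable_coe_circle u)).aemeasurable) ?_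
  exact ae_restrict_of_ae_restrict_of_subset hsub (ae_lt_top_shift hm hfin u c)

lemma integrableOn_toReal_shift {h : Circle' → ℝ≥0∞} (hm : Measurable h)
    (hfin : ∫⁻ x, h x ∂(volume : Measure Circle') ≠ ⊤) (u : Circle') (c : ℝ) :
    IntegrableOn (fun t : ℝ => (h (u + (t : Circle'))).toReal) (Ioc c (c+1)) volume := by
  refine integrable_toReal_of_lintegral_ne_top
    ((hm.comp (measurable_coe_circle u)).aemeasurable) ?_
  rw [← lintegral_circle_shift' u c h]
  exact hfin

lemma intervalIntegrable_of_unit {h : ℝ → ℝ}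
    (hint : ∀ c : ℝ, IntegrableOn h (Ioc c (c+1)) volume) :
    ∀ p q : ℝ, IntervalIntegrable h volume p q := by
  have claim : ∀ n : ℕ, ∀ p q : ℝ, q ≤ p + n → IntegrableOn h (Ioc p q) volume := by
    intro n
    induction n with
    | zero =>
      intro p q hq
      rw [Set.Ioc_eq_empty (by push_cast at hq; simpa using not_lt.2 hq)]
      exact integrableOn_empty
    | succ n ih =>
      intro p q hq
      rcases le_or_gt q (p + n) with hc | hc
      · exact ih p q hc
      · have h1 : Ioc p (p+n) ∪ Ioc (p+n) q = Ioc p q :=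
          Ioc_union_Ioc_eq_Ioc (by linarith [Nat.cast_nonneg (α := ℝ) n]) hc.le
        rw [← h1]
        refine (ih p (p+n) le_rfl).union ((hint (p+n)).mono_set ?_)
        refine Ioc_subset_Ioc le_rfl ?_
        push_cast at hq
        linarith
  have hIoc : ∀ p q : ℝ, IntegrableOn h (Ioc p q) volume := by
    intro p q
    exact claim ⌈q - p⌉₊ p q (by linarith [Nat.le_ceil (q - p)])
  intro p q
  exact ⟨hIoc p q, hIoc q p⟩



/-- sliding-window min -/
def smin (φ : ℝ → ℝ) (x : ℝ) : ℝ := sInf (φ '' Icc (x-1) x)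

variable {φ : ℝ → ℝ}

lemma smin_isLeast_window (hc : Continuous φ) (x : ℝ) :
    ∃ t ∈ Icc (x-1) x, IsMinOn φ (Icc (x-1) x) t ∧ smin φ x = φ t := by
  obtain ⟨t, ht, hmin⟩ := (isCompact_Icc (a := x-1) (b := x)).exists_isMinOn
    ⟨x, right_mem_Icc.2 (by linarith)⟩ hc.continuousOn
  refine ⟨t, ht, hmin, ?_⟩
  refine IsLeast.csInf_eq ⟨mem_image_of_mem _ ht, ?_⟩
  rintro _ ⟨s, hs, rfl⟩
  exact hmin hs

lemma step_le (hper : ∀ x, φ x ≤ φ (x - 1)) (s : ℝ) : ∀ n : ℕ, φ (s + n) ≤ φ s := by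
  intro n
  induction n with
  | zero => simp
  | succ n ih =>
    have h := hper (s + (n + 1 : ℕ))
    have : (s + (n+1:ℕ) - 1 : ℝ) = s + n := by push_cast; ring
    rw [this] at h
    exact h.trans ih

lemma smin_le_of_le (hc : Continuous φ) (hper : ∀ x, φ x ≤ φ (x - 1)) {s x : ℝ}
    (h : s ≤ x) : smin φ x ≤ φ s := by
  obtain ⟨t, ht, hmin, heq⟩ := smin_isLeast_window hc x
  rw [heq]
  rcases le_or_gt (x - 1) s with hcase | hcase
  · exact hmin ⟨hcase, h⟩
  · set k : ℕ := ⌈x - 1 - s⌉₊ with hk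
    have h0 : (0:ℝ) ≤ x - 1 - s := by linarith
    have h1 : x - 1 - s ≤ k := Nat.le_ceil _
    have h2 : (k:ℝ) < x - 1 - s + 1 := Nat.ceil_lt_add_one h0
    have hmem : s + k ∈ Icc (x-1) x := ⟨by linarith, by linarith⟩
    exact (hmin hmem).trans (step_le hper s k)

lemma smin_le_self (hc : Continuous φ) (hper : ∀ x, φ x ≤ φ (x - 1)) (x : ℝ) :
    smin φ x ≤ φ x := smin_le_of_le hc hper le_rfl

lemma smin_antitone (hc : Continuous φ) (hper : ∀ x, φ x ≤ φ (x - 1)) :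
    Antitone (smin φ) := by
  intro x y hxy
  obtain ⟨t, ht, hmin, heq⟩ := smin_isLeast_window hc x
  rw [heq]
  exact smin_le_of_le hc hper (ht.2.trans hxy)

lemma smin_eq_min (hc : Continuous φ) (hper : ∀ x, φ x ≤ φ (x - 1)) {x y : ℝ}
    (hxy : x ≤ y) :
    ∃ t ∈ Icc x y, IsMinOn φ (Icc x y) t ∧ smin φ y = min (smin φ x) (φ t) := by
  obtain ⟨t, ht, hmin⟩ := (isCompact_Icc (a := x) (b := y)).exists_isMinOn
    ⟨x, left_mem_Icc.2 hxy⟩ hc.continuousOn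
  refine ⟨t, ht, hmin, le_antisymm (le_min (smin_antitone hc hper hxy)
    (smin_le_of_le hc hper ht.2)) ?_⟩
  refine le_csInf (⟨φ y, mem_image_of_mem _ (right_mem_Icc.2 (by linarith))⟩) ?_
  rintro _ ⟨s, hs, rfl⟩
  rcases le_or_gt s x with hsx | hsx
  · exact (min_le_left _ _).trans (smin_le_of_le hc hper hsx)
  · exact (min_le_right _ _).trans (hmin ⟨hsx.le, hs.2⟩)

lemma smin_eq_of_minOn (hc : Continuous φ) (hper : ∀ x, φ x ≤ φ (x - 1)) {c e t : ℝ}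
    (ht : t ∈ Icc c e) (hmin : IsMinOn φ (Icc c e) t) (hlt : φ t < smin φ c) :
    smin φ t = φ t := by
  refine le_antisymm (smin_le_self hc hper t) ?_
  obtain ⟨s, hs, _, heq⟩ := smin_eq_min hc hper ht.1
  rw [heq]
  exact le_min hlt.le (hmin ⟨hs.1, hs.2.trans ht.2⟩)

lemma smin_const_on_bump (hc : Continuous φ) (hper : ∀ x, φ x ≤ φ (x - 1)) {c d : ℝ}
    (hcd : c < d) (hV : ∀ t ∈ Ioo c d, smin φ t < φ t) :
    ∀ t ∈ Ioo c d, smin φ t = smin φ c := by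
  intro t ht
  obtain ⟨s, hs, hsmin, heq⟩ := smin_eq_min hc hper (le_of_lt ht.1)
  rcases le_or_gt (smin φ c) (φ s) with hcase | hcase
  · rw [heq, min_eq_left hcase]
  · exfalso
    have hsc : c < s := by
      rcases hs.1.lt_or_eq with h | h
      · exact h
      · exact absurd (h ▸ hcase) (not_lt.2 (smin_le_self hc hper c))
    have hsd : s ∈ Ioo c d := ⟨hsc, lt_of_le_of_lt hs.2 ht.2⟩
    exact absurd (smin_eq_of_minOn hc hper hs hsmin hcase) (ne_of_lt (hV s hsd))

lemma smin_bump_eq (hc : Continuous φ) (hper : ∀ x, φ x ≤ φ (x - 1)) {c d : ℝ}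
    (hcd : c < d) (hV : ∀ t ∈ Ioo c d, smin φ t < φ t) :
    smin φ d = smin φ c := by
  obtain ⟨t, ht, hmin, heq⟩ := smin_eq_min hc hper hcd.le
  rcases le_or_gt (smin φ c) (φ t) with hcase | hcase
  · rw [heq, min_eq_left hcase]
  · exfalso
    have htc : c < t := by
      rcases ht.1.lt_or_eq with h | h
      · exact h
      · exact absurd (h ▸ hcase) (not_lt.2 (smin_le_self hc hper c))
    rcases ht.2.lt_or_eq with htd | htd
    · have h1 := smin_eq_of_minOn hc hper ht hmin hcase
      have h2 := smin_const_on_bump hc hper hcd hV t ⟨htc, htd⟩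
      exact absurd (h2 ▸ h1 : smin φ c = φ t) (by linarith)
    · -- t = d : use continuity
      subst htd
      have hge : smin φ c ≤ φ t := by
        have hne : (𝓝[Ioo c t] t).NeBot := by
          refine mem_closure_iff_nhdsWithin_neBot.1 ?_
          rw [closure_Ioo hcd.ne]
          exact ⟨hcd.le, le_rfl⟩
        refine ge_of_tendsto ((hc.tendsto t).mono_left (nhdsWithin_le_nhds (s := Ioo c t))) ?_
        filter_upwards [self_mem_nhdsWithin] with u hu
        have := smin_const_on_bump hc hper hcd hV u hu
        exact this ▸ (hV u hu).le
      linarith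

lemma isOpen_smin_lt (hc : Continuous φ) (hper : ∀ x, φ x ≤ φ (x - 1)) :
    IsOpen {x | smin φ x < φ x} := by
  rw [Metric.isOpen_iff]
  intro x hx
  set δ := φ x - smin φ x with hδ
  have hδpos : 0 < δ := sub_pos.2 hx
  obtain ⟨ε, hεpos, hε⟩ := Metric.continuousAt_iff.1 hc.continuousAt (δ/2) (by linarith)
  refine ⟨ε, hεpos, fun y hy => ?_⟩
  rw [Metric.mem_ball, Real.dist_eq] at hy
  have hφy : |φ y - φ x| < δ/2 := by
    have := hε (show dist y x < ε by rwa [Real.dist_eq])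
    rwa [Real.dist_eq] at this
  rcases le_or_gt x y with hxy | hxy
  · have : smin φ y ≤ smin φ x := smin_antitone hc hper hxy
    have : smin φ y < φ y := by
      have h1 : φ x - δ/2 < φ y := by cases' abs_lt.1 hφy with h _; linarith
      calc smin φ y ≤ smin φ x := this
        _ = φ x - δ := by rw [hδ]; ring
        _ < φ y := by linarith
    exact this
  · by_contra hcon
    have heqy : smin φ y = φ y :=
      le_antisymm (smin_le_self hc hper y) (not_lt.1 hcon)
    obtain ⟨t, ht, _, heq⟩ := smin_eq_min hc hper hxy.le
    have hy2 := abs_sub_lt_iff.1 hy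
    have hty : |t - x| < ε := by
      rw [abs_sub_lt_iff]
      exact ⟨by linarith [ht.2], by linarith [ht.1, hy2.2]⟩
    have hφt : |φ t - φ x| < δ/2 := by
      have := hε (show dist t x < ε by rwa [Real.dist_eq])
      rwa [Real.dist_eq] at this
    have hφy' := abs_sub_lt_iff.1 hφy
    have hφt' := abs_sub_lt_iff.1 hφt
    have h1 : smin φ x + δ/2 ≤ φ y := by
      have : smin φ x = φ x - δ := by rw [hδ]; ring
      linarith [hφy'.2]
    have h2 : smin φ x + δ/2 ≤ φ t := by
      have : smin φ x = φ x - δ := by rw [hδ]; ring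
      linarith [hφt'.2]
    have : smin φ x + δ/2 ≤ smin φ x := by
      calc smin φ x + δ/2 ≤ min (smin φ y) (φ t) := le_min (heqy ▸ h1) h2
        _ = smin φ x := heq.symm
    linarith

theorem skorokhod (g φ : ℝ → ℝ) (hg : ∀ p q, IntervalIntegrable g volume p q)
    (hφ : ∀ x, φ x = ∫ t in (0:ℝ)..x, g t)
    (hper : ∀ x, φ x ≤ φ (x - 1)) {σ : ℝ} (hσ : 0 ≤ σ) :
    ∫ t in Ioc 0 σ ∩ {x | smin φ x < φ x}, g t
      = (φ σ - smin φ σ) - (φ 0 - smin φ 0) := by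
  have hc : Continuous φ :=
    (intervalIntegral.continuous_primitive hg 0).congr fun x => (hφ x).symm
  rcases hσ.eq_or_lt with rfl | hσpos
  · simp
  set W := {x | smin φ x < φ x} with hW
  have hWopen : IsOpen W := isOpen_smin_lt hc hper
  set V := Ioo 0 σ ∩ W with hVdef
  have hVopen : IsOpen V := isOpen_Ioo.inter hWopen
  have h0nV : (0:ℝ) ∉ V := fun h => lt_irrefl 0 h.1.1
  have hσnV : σ ∉ V := fun h => lt_irrefl σ h.1.2
  -- component endpoints
  set cl : ℝ → ℝ := fun x => sSup {t | t ≤ x ∧ t ∉ V} with hcl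
  set cr : ℝ → ℝ := fun x => sInf {t | x ≤ t ∧ t ∉ V} with hcr
  have hSne : ∀ x, 0 ≤ x → {t | t ≤ x ∧ t ∉ V}.Nonempty := fun x hx => ⟨0, hx, h0nV⟩
  have hSbdd : ∀ x, BddAbove {t | t ≤ x ∧ t ∉ V} := fun x => ⟨x, fun t ht => ht.1⟩
  have hTne : ∀ x, x ≤ σ → {t | x ≤ t ∧ t ∉ V}.Nonempty := fun x hx => ⟨σ, hx, hσnV⟩
  have hTbdd : ∀ x, BddBelow {t | x ≤ t ∧ t ∉ V} := fun x => ⟨x, fun t ht => ht.1⟩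
  have hxV : ∀ x ∈ V, 0 < x ∧ x < σ := fun x hx => ⟨hx.1.1, hx.1.2⟩
  have hcl_ge0 : ∀ x ∈ V, 0 ≤ cl x := fun x hx =>
    le_csSup (hSbdd x) ⟨(hxV x hx).1.le, h0nV⟩
  have hcr_le : ∀ x ∈ V, cr x ≤ σ := fun x hx =>
    csInf_le (hTbdd x) ⟨(hxV x hx).2.le, hσnV⟩
  have hcl_lt : ∀ x ∈ V, cl x < x := by
    intro x hx
    obtain ⟨ε, hε, hball⟩ := Metric.isOpen_iff.1 hVopen x hx
    have : cl x ≤ x - ε/2 := by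
      refine csSup_le (hSne x (hxV x hx).1.le) (fun t ht => ?_)
      by_contra hcon
      push_neg at hcon
      refine ht.2 (hball ?_)
      rw [Metric.mem_ball, Real.dist_eq, abs_sub_lt_iff]
      exact ⟨by linarith [ht.1], by linarith⟩
    linarith
  have hcr_gt : ∀ x ∈ V, x < cr x := by
    intro x hx
    obtain ⟨ε, hε, hball⟩ := Metric.isOpen_iff.1 hVopen x hx
    have : x + ε/2 ≤ cr x := by
      refine le_csInf (hTne x (hxV x hx).2.le) (fun t ht => ?_)
      by_contra hcon
      push_neg at hcon
      refine ht.2 (hball ?_)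
      rw [Metric.mem_ball, Real.dist_eq, abs_sub_lt_iff]
      exact ⟨by linarith, by linarith [ht.1]⟩
    linarith
  have hIoo_sub : ∀ x ∈ V, Ioo (cl x) (cr x) ⊆ V := by
    intro x hx t ht
    rcases le_or_gt t x with htx | htx
    · by_contra hcon
      exact absurd (le_csSup (hSbdd x) ⟨htx, hcon⟩) (not_le.2 ht.1)
    · by_contra hcon
      exact absurd (csInf_le (hTbdd x) ⟨htx.le, hcon⟩) (not_le.2 ht.2)
  have hcl_nV : ∀ x ∈ V, cl x ∉ V := by
    intro x hx hmem
    obtain ⟨ε, hε, hball⟩ := Metric.isOpen_iff.1 hVopen _ hmem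
    obtain ⟨t, htS, hlt⟩ := exists_lt_of_lt_csSup (hSne x (hxV x hx).1.le)
      (show cl x - ε < cl x by linarith)
    refine htS.2 (hball ?_)
    have : t ≤ cl x := le_csSup (hSbdd x) htS
    rw [Metric.mem_ball, Real.dist_eq, abs_sub_lt_iff]
    exact ⟨by linarith, by linarith⟩
  have hcr_nV : ∀ x ∈ V, cr x ∉ V := by
    intro x hx hmem
    obtain ⟨ε, hε, hball⟩ := Metric.isOpen_iff.1 hVopen _ hmem
    obtain ⟨t, htS, hlt⟩ := exists_lt_of_csInf_lt (hTne x (hxV x hx).2.le)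
      (show cr x < cr x + ε by linarith)
    refine htS.2 (hball ?_)
    have : cr x ≤ t := csInf_le (hTbdd x) htS
    rw [Metric.mem_ball, Real.dist_eq, abs_sub_lt_iff]
    exact ⟨by linarith, by linarith⟩
  have hconst : ∀ x ∈ V, ∀ y ∈ Ioo (cl x) (cr x), cl y = cl x ∧ cr y = cr x := by
    intro x hx y hy
    have hyV : y ∈ V := hIoo_sub x hx hy
    constructor
    · refine le_antisymm ?_ (le_csSup (hSbdd y) ⟨hy.1.le, hcl_nV x hx⟩)
      refine csSup_le (hSne y (hxV y hyV).1.le) (fun t ht => ?_)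
      by_contra hcon
      push_neg at hcon
      exact ht.2 (hIoo_sub x hx ⟨hcon, lt_of_le_of_lt ht.1 hy.2⟩)
    · refine le_antisymm (csInf_le (hTbdd y) ⟨hy.2.le, hcr_nV x hx⟩) ?_
      refine le_csInf (hTne y (hxV y hyV).2.le) (fun t ht => ?_)
      by_contra hcon
      push_neg at hcon
      exact ht.2 (hIoo_sub x hx ⟨lt_of_lt_of_le hy.1 ht.1, hcon⟩)
  -- the set of components
  set Scomp : Set (ℝ × ℝ) := (fun x => (cl x, cr x)) '' (V ∩ Set.range ((↑) : ℚ → ℝ))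
    with hScomp
  have hScount : Scomp.Countable :=
    ((countable_range _).mono inter_subset_right).image _
  have hSprop : ∀ p ∈ Scomp, p.1 < p.2 ∧ 0 ≤ p.1 ∧ p.2 ≤ σ ∧ Ioo p.1 p.2 ⊆ V ∧
      p.1 ∉ V ∧ p.2 ∉ V := by
    rintro p ⟨q, ⟨hqV, _⟩, rfl⟩
    exact ⟨lt_trans (hcl_lt q hqV) (hcr_gt q hqV), hcl_ge0 q hqV, hcr_le q hqV,
      hIoo_sub q hqV, hcl_nV q hqV, hcr_nV q hqV⟩
  have hcover : V = ⋃ p ∈ Scomp, Ioo p.1 p.2 := by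
    apply Subset.antisymm
    · intro x hx
      obtain ⟨q, hq1, hq2⟩ := exists_rat_btwn (lt_trans (hcl_lt x hx) (hcr_gt x hx))
      have hqmem : (q:ℝ) ∈ Ioo (cl x) (cr x) := ⟨hq1, hq2⟩
      have hqV : (q:ℝ) ∈ V := hIoo_sub x hx hqmem
      have heq := hconst x hx _ hqmem
      refine mem_biUnion ⟨q, ⟨hqV, ⟨q, rfl⟩⟩, rfl⟩ ?_
      dsimp only
      rw [heq.1, heq.2]
      exact ⟨hcl_lt x hx, hcr_gt x hx⟩
    · refine iUnion₂_subset (fun p hp => (hSprop p hp).2.2.2.1)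
  have hdisj : ∀ p ∈ Scomp, ∀ p' ∈ Scomp, p ≠ p' →
      Disjoint (Ioo p.1 p.2) (Ioo p'.1 p'.2) := by
    rintro p hp p' hp' hne
    rw [Set.disjoint_left]
    intro y hy hy'
    obtain ⟨q, ⟨hqV, _⟩, rfl⟩ := hp
    obtain ⟨q', ⟨hq'V, _⟩, rfl⟩ := hp'
    dsimp only at hy hy'
    have h1 := hconst q hqV y hy
    have h2 := hconst q' hq'V y hy'
    exact hne (by dsimp only; rw [← h1.1, ← h1.2, ← h2.1, ← h2.2])
  have huniq0 : ∀ p ∈ Scomp, ∀ p' ∈ Scomp, p.1 = 0 → p'.1 = 0 → p = p' := by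
    intro p hp p' hp' h1 h2
    by_contra hne
    have hd := hdisj p hp p' hp' hne
    have hp2 : 0 < p.2 := h1 ▸ (hSprop p hp).1
    have hp'2 : 0 < p'.2 := h2 ▸ (hSprop p' hp').1
    have hymem : min p.2 p'.2 / 2 ∈ Ioo p.1 p.2 := by
      rw [h1]
      constructor
      · positivity
      · calc min p.2 p'.2 / 2 < min p.2 p'.2 := by
              have : 0 < min p.2 p'.2 := lt_min hp2 hp'2
              linarith
          _ ≤ p.2 := min_le_left _ _
    have hymem' : min p.2 p'.2 / 2 ∈ Ioo p'.1 p'.2 := by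
      rw [h2]
      constructor
      · positivity
      · calc min p.2 p'.2 / 2 < min p.2 p'.2 := by
              have : 0 < min p.2 p'.2 := lt_min hp2 hp'2
              linarith
          _ ≤ p'.2 := min_le_right _ _
    exact Set.disjoint_left.1 hd hymem hymem'
  have huniqσ : ∀ p ∈ Scomp, ∀ p' ∈ Scomp, p.2 = σ → p'.2 = σ → p = p' := by
    intro p hp p' hp' h1 h2
    by_contra hne
    have hd := hdisj p hp p' hp' hne
    have hp1 : p.1 < σ := h1 ▸ (hSprop p hp).1
    have hp'1 : p'.1 < σ := h2 ▸ (hSprop p' hp').1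
    have hmax : max p.1 p'.1 < σ := max_lt hp1 hp'1
    have hymem : (max p.1 p'.1 + σ)/2 ∈ Ioo p.1 p.2 := by
      rw [h1]
      exact ⟨by linarith [le_max_left p.1 p'.1], by linarith⟩
    have hymem' : (max p.1 p'.1 + σ)/2 ∈ Ioo p'.1 p'.2 := by
      rw [h2]
      exact ⟨by linarith [le_max_right p.1 p'.1], by linarith⟩
    exact Set.disjoint_left.1 hd hymem hymem'
  have hex0 : smin φ 0 < φ 0 → ∃ p ∈ Scomp, p.1 = 0 := by
    intro h0
    obtain ⟨ε, hε, hball⟩ := Metric.isOpen_iff.1 hWopen 0 h0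
    obtain ⟨q, hq1, hq2⟩ := exists_rat_btwn (show (0:ℝ) < min ε σ from lt_min hε hσpos)
    have hqV : (q:ℝ) ∈ V := by
      refine ⟨⟨hq1, lt_of_lt_of_le hq2 (min_le_right _ _)⟩, hball ?_⟩
      rw [Metric.mem_ball, Real.dist_eq, sub_zero, abs_of_pos hq1]
      exact lt_of_lt_of_le hq2 (min_le_left _ _)
    refine ⟨(cl q, cr q), ⟨q, ⟨hqV, ⟨q, rfl⟩⟩, rfl⟩, ?_⟩
    refine le_antisymm ?_ (hcl_ge0 _ hqV)
    refine csSup_le (hSne _ hq1.le) (fun t ht => ?_)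
    by_contra hcon
    push_neg at hcon
    refine ht.2 ⟨⟨hcon, lt_of_le_of_lt ht.1 (lt_of_lt_of_le hq2 (min_le_right _ _))⟩,
      hball ?_⟩
    rw [Metric.mem_ball, Real.dist_eq, sub_zero, abs_of_pos hcon]
    exact lt_of_le_of_lt ht.1 (lt_of_lt_of_le hq2 (min_le_left _ _))
  have hexσ : smin φ σ < φ σ → ∃ p ∈ Scomp, p.2 = σ := by
    intro h0
    obtain ⟨ε, hε, hball⟩ := Metric.isOpen_iff.1 hWopen σ h0
    obtain ⟨q, hq1, hq2⟩ := exists_rat_btwn (show max (σ - ε) 0 < σ from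
      max_lt (by linarith) hσpos)
    have hq0 : (0:ℝ) < q := lt_of_le_of_lt (le_max_right _ _) hq1
    have hqσε : σ - ε < q := lt_of_le_of_lt (le_max_left _ _) hq1
    have hqV : (q:ℝ) ∈ V := by
      refine ⟨⟨hq0, hq2⟩, hball ?_⟩
      rw [Metric.mem_ball, Real.dist_eq, abs_sub_lt_iff]
      exact ⟨by linarith, by linarith⟩
    refine ⟨(cl q, cr q), ⟨q, ⟨hqV, ⟨q, rfl⟩⟩, rfl⟩, ?_⟩
    refine le_antisymm (hcr_le _ hqV) ?_
    refine le_csInf (hTne _ hq2.le) (fun t ht => ?_)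
    by_contra hcon
    push_neg at hcon
    refine ht.2 ⟨⟨lt_of_lt_of_le hq0 ht.1, hcon⟩, hball ?_⟩
    rw [Metric.mem_ball, Real.dist_eq, abs_sub_lt_iff]
    constructor <;> linarith [ht.1]
  -- integration over components
  have hVmeas : MeasurableSet V := hVopen.measurableSet
  have hgInt : IntegrableOn g (Ioc 0 σ) volume :=
    (intervalIntegrable_iff_integrableOn_Ioc_of_le hσ).1 (hg 0 σ)
  have hVsub : V ⊆ Ioc 0 σ := fun t ht => ⟨ht.1.1, ht.1.2.le⟩
  have step1 : ∫ t in Ioc 0 σ ∩ W, g t = ∫ t in V, g t := by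
    refine setIntegral_congr_set ?_
    exact ((Ioo_ae_eq_Ioc (a := (0:ℝ)) (b := σ) (μ := volume)).symm).inter
      (EventuallyEq.refl _ _)
  haveI : Countable Scomp := hScount.to_subtype
  have hiUnion : V = ⋃ (p : Scomp), Ioo (p : ℝ × ℝ).1 (p : ℝ × ℝ).2 := by
    rw [hcover, biUnion_eq_iUnion]
  have step2 : ∫ t in V, g t = ∑' (p : Scomp), ∫ t in Ioo (p : ℝ × ℝ).1 (p : ℝ × ℝ).2, g t := by
    rw [hiUnion]
    refine integral_iUnion (fun p => measurableSet_Ioo) ?_ ?_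
    · intro p p' hne
      exact hdisj p p.2 p' p'.2 (fun h => hne (Subtype.ext h))
    · rw [← hiUnion]
      exact hgInt.mono_set hVsub
  have step3 : ∀ p ∈ Scomp, ∫ t in Ioo p.1 p.2, g t
      = (if p.1 = 0 then -(φ 0 - smin φ 0) else 0)
        + (if p.2 = σ then (φ σ - smin φ σ) else 0) := by
    intro p hp
    obtain ⟨hlt, hge0, hleσ, hsub, hnV1, hnV2⟩ := hSprop p hp
    have hval : ∫ t in Ioo p.1 p.2, g t = φ p.2 - φ p.1 := by
      rw [← integral_Ioc_eq_integral_Ioo, ← intervalIntegral.integral_of_le hlt.le,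
        hφ p.2, hφ p.1]
      exact (intervalIntegral.integral_interval_sub_left (hg 0 p.2) (hg 0 p.1)).symm
    have hsmineq : smin φ p.2 = smin φ p.1 :=
      smin_bump_eq hc hper hlt (fun t ht => (hsub ht).2)
    have hl : p.1 ≠ 0 → φ p.1 = smin φ p.1 := by
      intro hne
      have h1 : p.1 ∈ Ioo 0 σ := ⟨hge0.lt_of_ne (Ne.symm hne), lt_of_lt_of_le hlt hleσ⟩
      have h2 : p.1 ∉ W := fun hWm => hnV1 ⟨h1, hWm⟩
      exact le_antisymm (not_lt.1 h2) (smin_le_self hc hper _)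
    have hr : p.2 ≠ σ → φ p.2 = smin φ p.2 := by
      intro hne
      have h1 : p.2 ∈ Ioo 0 σ := ⟨lt_of_le_of_lt hge0 hlt, hleσ.lt_of_ne hne⟩
      have h2 : p.2 ∉ W := fun hWm => hnV2 ⟨h1, hWm⟩
      exact le_antisymm (not_lt.1 h2) (smin_le_self hc hper _)
    rw [hval]
    by_cases h1 : p.1 = 0 <;> by_cases h2 : p.2 = σ
    · rw [if_pos h1, if_pos h2]
      have e1 : φ p.1 = φ 0 := by rw [h1]
      have e2 : smin φ p.1 = smin φ 0 := by rw [h1]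
      have e3 : φ p.2 = φ σ := by rw [h2]
      have e4 : smin φ p.2 = smin φ σ := by rw [h2]
      linarith
    · rw [if_pos h1, if_neg h2]
      have e1 : φ p.1 = φ 0 := by rw [h1]
      have e2 : smin φ p.1 = smin φ 0 := by rw [h1]
      have e3 := hr h2
      linarith
    · rw [if_neg h1, if_pos h2]
      have e1 := hl h1
      have e3 : φ p.2 = φ σ := by rw [h2]
      have e4 : smin φ p.2 = smin φ σ := by rw [h2]
      linarith
    · rw [if_neg h1, if_neg h2]
      have e1 := hl h1
      have e3 := hr h2
      linarith
  rw [step1, step2, tsum_congr (fun p : Scomp => step3 p p.2)]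
  set A := φ 0 - smin φ 0 with hA
  set B := φ σ - smin φ σ with hB
  have hA0 : 0 ≤ A := sub_nonneg.2 (smin_le_self hc hper 0)
  have hB0 : 0 ≤ B := sub_nonneg.2 (smin_le_self hc hper σ)
  by_cases hcase0 : ∃ p ∈ Scomp, p.1 = 0
  · obtain ⟨p₀, hp₀, hp₀1⟩ := hcase0
    by_cases hcaseσ : ∃ p ∈ Scomp, p.2 = σ
    · obtain ⟨p₁, hp₁, hp₁2⟩ := hcaseσ
      by_cases hpp : p₀ = p₁
      · rw [tsum_eq_single (⟨p₀, hp₀⟩ : Scomp) ?_]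
        · rw [if_pos hp₀1, if_pos (hpp ▸ hp₁2)]
          ring
        · intro p' hne
          have hv : (p' : ℝ × ℝ) ≠ p₀ := fun h => hne (Subtype.ext h)
          rw [if_neg (fun h => hv (huniq0 p' p'.2 p₀ hp₀ h hp₀1)),
            if_neg (fun h => hv (hpp ▸ huniqσ p' p'.2 p₁ hp₁ h hp₁2)), add_zero]
      · rw [tsum_eq_sum (s := {(⟨p₀, hp₀⟩ : Scomp), ⟨p₁, hp₁⟩}) ?_]
        · rw [Finset.sum_pair (fun h => hpp (congrArg Subtype.val h))]
          have hp₀2 : p₀.2 ≠ σ := fun h => hpp (huniqσ p₀ hp₀ p₁ hp₁ h hp₁2)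
          have hp₁1 : p₁.1 ≠ 0 := fun h => hpp (huniq0 p₀ hp₀ p₁ hp₁ hp₀1 h)
          rw [if_pos hp₀1, if_neg hp₀2, if_neg hp₁1, if_pos hp₁2]
          ring
        · intro p' hne
          simp only [Finset.mem_insert, Finset.mem_singleton] at hne
          push_neg at hne
          have hv0 : (p' : ℝ × ℝ) ≠ p₀ := fun h => hne.1 (Subtype.ext h)
          have hv1 : (p' : ℝ × ℝ) ≠ p₁ := fun h => hne.2 (Subtype.ext h)
          rw [if_neg (fun h => hv0 (huniq0 p' p'.2 p₀ hp₀ h hp₀1)),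
            if_neg (fun h => hv1 (huniqσ p' p'.2 p₁ hp₁ h hp₁2)), add_zero]
    · push_neg at hcaseσ
      have hBz : B = 0 := by
        rcases hB0.eq_or_lt with h | h
        · exact h.symm
        · obtain ⟨p, hp, hpeq⟩ := hexσ (sub_pos.1 h)
          exact absurd hpeq (hcaseσ p hp)
      rw [tsum_eq_single (⟨p₀, hp₀⟩ : Scomp) ?_]
      · rw [if_pos hp₀1, if_neg (hcaseσ p₀ hp₀), hBz]
        ring
      · intro p' hne
        have hv : (p' : ℝ × ℝ) ≠ p₀ := fun h => hne (Subtype.ext h)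
        rw [if_neg (fun h => hv (huniq0 p' p'.2 p₀ hp₀ h hp₀1)),
          if_neg (hcaseσ p' p'.2), add_zero]
  · push_neg at hcase0
    have hAz : A = 0 := by
      rcases hA0.eq_or_lt with h | h
      · exact h.symm
      · obtain ⟨p, hp, hpeq⟩ := hex0 (sub_pos.1 h)
        exact absurd hpeq (hcase0 p hp)
    by_cases hcaseσ : ∃ p ∈ Scomp, p.2 = σ
    · obtain ⟨p₁, hp₁, hp₁2⟩ := hcaseσ
      rw [tsum_eq_single (⟨p₁, hp₁⟩ : Scomp) ?_]
      · rw [if_neg (hcase0 p₁ hp₁), if_pos hp₁2, hAz]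
        ring
      · intro p' hne
        have hv : (p' : ℝ × ℝ) ≠ p₁ := fun h => hne (Subtype.ext h)
        rw [if_neg (hcase0 p' p'.2),
          if_neg (fun h => hv (huniqσ p' p'.2 p₁ hp₁ h hp₁2)), zero_add]
    · push_neg at hcaseσ
      have hBz : B = 0 := by
        rcases hB0.eq_or_lt with h | h
        · exact h.symm
        · obtain ⟨p, hp, hpeq⟩ := hexσ (sub_pos.1 h)
          exact absurd hpeq (hcaseσ p hp)
      have : ∀ p : Scomp, (if (p : ℝ × ℝ).1 = 0 then -A else 0)
          + (if (p : ℝ × ℝ).2 = σ then B else 0) = 0 := by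
        intro p
        rw [if_neg (hcase0 p p.2), if_neg (hcaseσ p p.2), add_zero]
      rw [tsum_congr this, tsum_zero, hAz, hBz]
      ring

lemma toReal_withDensity_arcCC {h : Circle' → ℝ≥0∞} (hm : Measurable h)
    (hfin : ∫⁻ x, h x ∂(volume : Measure Circle') ≠ ⊤) (u v : Circle') :
    ((volume.withDensity h) (arcCC u v)).toReal
      = ∫ t : ℝ in Ioc 0 (theta u v), (h (u + (t : Circle'))).toReal := by
  have hθm := theta_mem u v
  rw [withDensity_apply _ (measurableSet_arcCC u v), lintegral_arcCC h hm,
    setIntegral_toReal_shift hm hfin u 0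
      (by rw [zero_add]; exact Ioc_subset_Ioc le_rfl hθm.2.le)]

lemma toReal_withDensity_arcOC {h : Circle' → ℝ≥0∞} (hm : Measurable h)
    (hfin : ∫⁻ x, h x ∂(volume : Measure Circle') ≠ ⊤) (u v : Circle') :
    ((volume.withDensity h) (arcOC u v)).toReal
      = ∫ t : ℝ in Ioc 0 (theta u v), (h (u + (t : Circle'))).toReal := by
  have hθm := theta_mem u v
  have h1 := lintegral_arcOC_inter h hm u v Set.univ MeasurableSet.univ
  rw [inter_univ] at h1
  have h2 : {t : ℝ | u + (t : Circle') ∈ Set.univ} = Set.univ := by simp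
  rw [h2, inter_univ] at h1
  rw [withDensity_apply _ (measurableSet_arcOC u v), h1,
    setIntegral_toReal_shift hm hfin u 0
      (by rw [zero_add]; exact Ioc_subset_Ioc le_rfl hθm.2.le)]


/-- if `ρ₁, ρ₂` are absolutely continuous with densities `f₁, f₂`, the
collapsed measure is absolutely continuous with density `f₂` on `𝒥` and `f₁` on `𝒥ᶜ`:
for every half-open arc `(a,b]`,
`ρ₁((a,b]) + J(a) − J(b) = ∫_{(a,b]∩𝒥ᶜ} f₁ + ∫_{(a,b]∩𝒥} f₂`. -/
theorem stmt7 (f₁ f₂ : Circle' → ℝ≥0∞) (hf₁ : Measurable f₁) (hf₂ : Measurable f₂)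
    (ρ₁ ρ₂ : Measure Circle') [IsFiniteMeasure ρ₁] [IsFiniteMeasure ρ₂]
    (hd₁ : ρ₁ = (volume : Measure Circle').withDensity f₁)
    (hd₂ : ρ₂ = (volume : Measure Circle').withDensity f₂)
    (hmass : ρ₁ Set.univ ≤ ρ₂ Set.univ) :
    ∀ a b : Circle',
      (ρ₁ (arcOC a b)).toReal + flux ρ₁ ρ₂ a - flux ρ₁ ρ₂ b
        = (∫⁻ u in arcOC a b ∩ (Jset ρ₁ ρ₂)ᶜ, f₁ u ∂(volume : Measure Circle')).toReal
          + (∫⁻ u in arcOC a b ∩ Jset ρ₁ ρ₂, f₂ u ∂(volume : Measure Circle')).toReal := by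
  intro a b
  have hρ1u : ρ₁ Set.univ = ∫⁻ x, f₁ x ∂(volume : Measure Circle') := by
    rw [hd₁, withDensity_apply _ MeasurableSet.univ, Measure.restrict_univ]
  have hρ2u : ρ₂ Set.univ = ∫⁻ x, f₂ x ∂(volume : Measure Circle') := by
    rw [hd₂, withDensity_apply _ MeasurableSet.univ, Measure.restrict_univ]
  have hfin₁ : ∫⁻ x, f₁ x ∂(volume : Measure Circle') ≠ ⊤ := by
    rw [← hρ1u]; exact measure_ne_top ρ₁ _
  have hfin₂ : ∫⁻ x, f₂ x ∂(volume : Measure Circle') ≠ ⊤ := by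
    rw [← hρ2u]; exact measure_ne_top ρ₂ _
  set σ := theta a b with hσdef
  have hσm : σ ∈ Ico (0:ℝ) 1 := theta_mem a b
  set g1 : ℝ → ℝ := fun t => (f₁ (a + (t : Circle'))).toReal with hg1def
  set g2 : ℝ → ℝ := fun t => (f₂ (a + (t : Circle'))).toReal with hg2def
  set gg : ℝ → ℝ := fun t => g1 t - g2 t with hggdef
  have hint1 : ∀ p q, IntervalIntegrable g1 volume p q :=
    intervalIntegrable_of_unit (fun c => integrableOn_toReal_shift hf₁ hfin₁ a c)
  have hint2 : ∀ p q, IntervalIntegrable g2 volume p q :=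
    intervalIntegrable_of_unit (fun c => integrableOn_toReal_shift hf₂ hfin₂ a c)
  have hintg : ∀ p q, IntervalIntegrable gg volume p q := fun p q =>
    (hint1 p q).sub (hint2 p q)
  set φ : ℝ → ℝ := fun x => ∫ t in (0:ℝ)..x, gg t with hφdef
  have hφ : ∀ x, φ x = ∫ t in (0:ℝ)..x, gg t := fun _ => rfl
  have hc : Continuous φ := intervalIntegral.continuous_primitive hintg 0
  -- integrability on translated unit intervals
  have hIntOn1 : ∀ c d : ℝ, c ≤ d → d ≤ c + 1 → IntegrableOn g1 (Ioc c d) volume := by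
    intro c d _ h2
    exact (integrableOn_toReal_shift hf₁ hfin₁ a c).mono_set (Ioc_subset_Ioc le_rfl h2)
  have hIntOn2 : ∀ c d : ℝ, c ≤ d → d ≤ c + 1 → IntegrableOn g2 (Ioc c d) volume := by
    intro c d _ h2
    exact (integrableOn_toReal_shift hf₂ hfin₂ a c).mono_set (Ioc_subset_Ioc le_rfl h2)
  -- unit-period integrals
  have hunit1 : ∀ c : ℝ, ∫ t in Ioc c (c+1), g1 t = (ρ₁ Set.univ).toReal := by
    intro c
    rw [hg1def, setIntegral_toReal_shift hf₁ hfin₁ a c (le_refl _),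
      ← lintegral_circle_shift' a c f₁, hρ1u]
  have hunit2 : ∀ c : ℝ, ∫ t in Ioc c (c+1), g2 t = (ρ₂ Set.univ).toReal := by
    intro c
    rw [hg2def, setIntegral_toReal_shift hf₂ hfin₂ a c (le_refl _),
      ← lintegral_circle_shift' a c f₂, hρ2u]
  have hper : ∀ x, φ x ≤ φ (x - 1) := by
    intro x
    have h1 : φ x - φ (x-1) = ∫ t in (x-1)..x, gg t := by
      rw [hφ, hφ]
      exact (intervalIntegral.integral_interval_sub_left (hintg 0 x) (hintg 0 (x-1)))
    have h2 : ∫ t in (x-1)..x, gg t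
        = (ρ₁ Set.univ).toReal - (ρ₂ Set.univ).toReal := by
      rw [intervalIntegral.integral_of_le (by linarith : x - 1 ≤ x)]
      have h3 : ∫ t in Ioc (x-1) x, gg t
          = (∫ t in Ioc (x-1) x, g1 t) - ∫ t in Ioc (x-1) x, g2 t := by
        exact integral_sub (hIntOn1 (x-1) x (by linarith) (by linarith))
          (hIntOn2 (x-1) x (by linarith) (by linarith))
      have h4 := hunit1 (x-1)
      have h5 := hunit2 (x-1)
      rw [sub_add_cancel] at h4 h5
      rw [h3, h4, h5]
    have h6 : (ρ₁ Set.univ).toReal ≤ (ρ₂ Set.univ).toReal :=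
      ENNReal.toReal_mono (measure_ne_top ρ₂ _) hmass
    linarith
  -- excess formula
  have hexcess : ∀ (u : Circle') (x : ℝ),
      excess ρ₁ ρ₂ u (a + (x : Circle')) = φ x - φ (x - theta u (a + (x : Circle'))) := by
    intro u x
    set r := theta u (a + (x : Circle')) with hrdef
    have hr : r ∈ Ico (0:ℝ) 1 := theta_mem _ _
    have hu : u = a + (x : Circle') - (r : Circle') := by
      have h := coe_theta u (a + (x : Circle'))
      rw [← hrdef] at h
      rw [h]
      abel
    have hpt : ∀ t : ℝ, u + (t : Circle') = a + ((x - r + t : ℝ) : Circle') := by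
      intro t
      rw [hu, AddCircle.coe_add, AddCircle.coe_sub]
      abel
    have e1 : excess ρ₁ ρ₂ u (a + (x : Circle'))
        = ∫ t in Ioc 0 r, gg (x - r + t) := by
      rw [excess, hd₁, hd₂, toReal_withDensity_arcCC hf₁ hfin₁,
        toReal_withDensity_arcCC hf₂ hfin₂, ← hrdef]
      rw [← integral_sub
        ((integrableOn_toReal_shift hf₁ hfin₁ u 0).mono_set
          (by rw [zero_add]; exact Ioc_subset_Ioc le_rfl hr.2.le))
        ((integrableOn_toReal_shift hf₂ hfin₂ u 0).mono_set
          (by rw [zero_add]; exact Ioc_subset_Ioc le_rfl hr.2.le))]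
      refine setIntegral_congr_fun measurableSet_Ioc (fun t _ => ?_)
      rw [hggdef]
      dsimp only [g1, g2]
      rw [hpt t]
    have e2 : ∫ t in Ioc 0 r, gg (x - r + t) = φ x - φ (x - r) := by
      rw [← intervalIntegral.integral_of_le hr.1]
      have h1 : ∀ t : ℝ, gg (x - r + t) = gg ((x - r) + t) := fun t => rfl
      rw [show (fun t => gg (x - r + t)) = (fun t => gg ((x-r) + t)) from rfl]
      rw [intervalIntegral.integral_comp_add_left gg (x - r)]
      rw [add_zero, show x - r + r = x by ring]
      rw [hφ, hφ]
      exact (intervalIntegral.integral_interval_sub_left (hintg 0 x) (hintg 0 (x-r))).symm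
    rw [e1, e2]
  -- flux formula
  have hbdd : ∀ x : ℝ, ∀ u : Circle',
      max (excess ρ₁ ρ₂ u (a + (x : Circle'))) 0 ≤ φ x - smin φ x := by
    intro x u
    rw [hexcess u x]
    have h1 : smin φ x ≤ φ (x - theta u (a + (x : Circle'))) :=
      smin_le_of_le hc hper (by linarith [(theta_mem u (a + (x : Circle'))).1])
    exact max_le (by linarith) (by linarith [smin_le_self hc hper x])
  have hflux : ∀ x : ℝ, flux ρ₁ ρ₂ (a + (x : Circle')) = φ x - smin φ x := by
    intro x
    have hBdd : BddAbove (Set.range fun u => max (excess ρ₁ ρ₂ u (a + (x : Circle'))) 0) :=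
      ⟨φ x - smin φ x, by rintro _ ⟨u, rfl⟩; exact hbdd x u⟩
    refine le_antisymm (ciSup_le (hbdd x)) ?_
    obtain ⟨t, ht, hmin, heq⟩ := smin_isLeast_window hc x
    rcases ht.1.eq_or_lt with heq1 | hlt1
    · -- t = x - 1 : then φ x = smin φ x
      have h1 : φ x ≤ φ (x - 1) := hper x
      have h2 : smin φ x = φ (x-1) := by rw [heq, ← heq1]
      have h3 : φ x = smin φ x :=
        le_antisymm (h2 ▸ h1) (smin_le_self hc hper x)
      have h4 : (0:ℝ) ≤ flux ρ₁ ρ₂ (a + (x : Circle')) := by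
        refine le_trans (le_max_right _ 0) (le_ciSup hBdd a)
      rw [flux] at h4 ⊢
      linarith
    · set r := x - t with hrdef2
      have hrmem : r ∈ Ico (0:ℝ) 1 := ⟨by linarith [ht.2], by linarith⟩
      set u := a + (x : Circle') - (r : Circle') with hudef
      have h2 : theta u (a + (x : Circle')) = r := theta_sub_coe _ hrmem
      have h3 : excess ρ₁ ρ₂ u (a + (x : Circle')) = φ x - smin φ x := by
        rw [hexcess u x, h2, show x - r = t by rw [hrdef2]; ring, heq]
      have h4 : max (excess ρ₁ ρ₂ u (a + (x : Circle'))) 0 = φ x - smin φ x := by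
        rw [h3]
        exact max_eq_left (by linarith [smin_le_self hc hper x])
      calc φ x - smin φ x = max (excess ρ₁ ρ₂ u (a + (x : Circle'))) 0 := h4.symm
        _ ≤ _ := le_ciSup hBdd u
  -- Jset characterisation
  have hJiff : ∀ x : ℝ, (a + (x : Circle')) ∈ Jset ρ₁ ρ₂ ↔ smin φ x < φ x := by
    intro x
    constructor
    · rintro ⟨u, hu⟩
      rw [hexcess u x] at hu
      have h1 : smin φ x ≤ φ (x - theta u (a + (x : Circle'))) :=
        smin_le_of_le hc hper (by linarith [(theta_mem u (a + (x : Circle'))).1])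
      linarith
    · intro h
      obtain ⟨t, ht, hmin, heq⟩ := smin_isLeast_window hc x
      have hlt1 : x - 1 < t := by
        rcases ht.1.eq_or_lt with heq1 | hlt1
        · exfalso
          have h1 : φ x ≤ φ (x - 1) := hper x
          have h2 : smin φ x = φ (x-1) := by rw [heq, ← heq1]
          linarith
        · exact hlt1
      set r := x - t with hrdef2
      have hrmem : r ∈ Ico (0:ℝ) 1 := ⟨by linarith [ht.2], by linarith⟩
      refine ⟨a + (x : Circle') - (r : Circle'), ?_⟩
      rw [hexcess _ x, theta_sub_coe _ hrmem, show x - r = t by rw [hrdef2]; ring]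
      linarith [heq]
  -- open/measurable sets
  set W : Set ℝ := {x | smin φ x < φ x} with hWdef
  have hWopen : IsOpen W := isOpen_smin_lt hc hper
  have hWmeas : MeasurableSet W := hWopen.measurableSet
  have hJeq : Jset ρ₁ ρ₂ = (fun t : ℝ => a + (t : Circle')) '' W := by
    ext v
    constructor
    · intro hv
      refine ⟨theta a v, ?_, ?_⟩
      · rw [hWdef, mem_setOf_eq]
        refine (hJiff (theta a v)).1 ?_
        rwa [show a + ((theta a v : ℝ) : Circle') = v by rw [coe_theta]; abel]
      · show a + ((theta a v : ℝ) : Circle') = v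
        rw [coe_theta]; abel
    · rintro ⟨x, hx, rfl⟩
      exact (hJiff x).2 hx
  have hJopen : IsOpen (Jset ρ₁ ρ₂) := by
    rw [hJeq]
    have h1 : IsOpenMap (QuotientAddGroup.mk : ℝ → Circle') :=
      QuotientAddGroup.isOpenMap_coe
    have h2 : IsOpenMap (fun t : ℝ => a + (t : Circle')) :=
      (Homeomorph.isOpenMap (Homeomorph.addLeft a)).comp h1
    exact h2 _ hWopen
  have hJmeas : MeasurableSet (Jset ρ₁ ρ₂) := hJopen.measurableSet
  have hQJ : {t : ℝ | a + (t : Circle') ∈ Jset ρ₁ ρ₂} = W := by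
    ext x
    exact hJiff x
  have hQJc : {t : ℝ | a + (t : Circle') ∈ (Jset ρ₁ ρ₂)ᶜ} = Wᶜ := by
    ext x
    simp only [mem_setOf_eq, mem_compl_iff]
    exact not_congr (hJiff x)
  -- lhs pieces
  have l1 : (ρ₁ (arcOC a b)).toReal = ∫ t in Ioc 0 σ, g1 t := by
    rw [hd₁, toReal_withDensity_arcOC hf₁ hfin₁ a b]
  have l2 : flux ρ₁ ρ₂ a = φ 0 - smin φ 0 := by
    have h0 : a + ((0:ℝ) : Circle') = a := by
      rw [show ((0:ℝ) : Circle') = 0 from rfl, add_zero]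
    rw [← h0, hflux 0]
  have l3 : flux ρ₁ ρ₂ b = φ σ - smin φ σ := by
    have h0 : a + ((σ:ℝ) : Circle') = b := by rw [hσdef, coe_theta]; abel
    rw [← h0, hflux σ]
  -- rhs pieces
  have r1 : (∫⁻ u in arcOC a b ∩ (Jset ρ₁ ρ₂)ᶜ, f₁ u ∂(volume : Measure Circle')).toReal
      = ∫ t in Ioc 0 σ ∩ Wᶜ, g1 t := by
    rw [lintegral_arcOC_inter f₁ hf₁ a b _ hJmeas.compl, hQJc,
      ← setIntegral_toReal_shift hf₁ hfin₁ a 0 (s := Ioc 0 σ ∩ Wᶜ)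
        (by rw [zero_add]; exact inter_subset_left.trans (Ioc_subset_Ioc le_rfl hσm.2.le))]
  have r2 : (∫⁻ u in arcOC a b ∩ Jset ρ₁ ρ₂, f₂ u ∂(volume : Measure Circle')).toReal
      = ∫ t in Ioc 0 σ ∩ W, g2 t := by
    rw [lintegral_arcOC_inter f₂ hf₂ a b _ hJmeas, hQJ,
      ← setIntegral_toReal_shift hf₂ hfin₂ a 0 (s := Ioc 0 σ ∩ W)
        (by rw [zero_add]; exact inter_subset_left.trans (Ioc_subset_Ioc le_rfl hσm.2.le))]
  -- Skorokhod identity and splitting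
  have key := skorokhod gg φ hintg hφ hper hσm.1
  rw [← hWdef] at key
  have hIntOnσ1 : IntegrableOn g1 (Ioc 0 σ) volume :=
    hIntOn1 0 σ hσm.1 (by linarith [hσm.2.le])
  have hIntOnσ2 : IntegrableOn g2 (Ioc 0 σ) volume :=
    hIntOn2 0 σ hσm.1 (by linarith [hσm.2.le])
  have split1 : (∫ t in Ioc 0 σ ∩ W, g1 t) + ∫ t in Ioc 0 σ \ W, g1 t
      = ∫ t in Ioc 0 σ, g1 t := integral_inter_add_diff hWmeas hIntOnσ1
  rw [diff_eq] at split1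
  have splitg : ∫ t in Ioc 0 σ ∩ W, gg t
      = (∫ t in Ioc 0 σ ∩ W, g1 t) - ∫ t in Ioc 0 σ ∩ W, g2 t :=
    integral_sub (hIntOnσ1.mono_set inter_subset_left)
      (hIntOnσ2.mono_set inter_subset_left)
  rw [l1, l2, l3, r1, r2]
  linarith [key, split1, splitg]

end
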